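/- Let k be a field and Q ⊆ ℤ^d a sharp affine semigroup. For every face F of Q, the k-linear span P_F of the set of monomials {x^q : q ∈ Q ∖ F} is a prime ideal of the semigroup algebra k[Q], and the quotient k[Q]/P_F is isomorphic as a k-algebra to the semigroup algebra k[F] of the face F. -/

import Mathlib

open Pointwise

/-- Let `k` be a field and `Q ⊆ ℤ^d` a sharp affine semigroup.  For any
face `F` of `Q`, the `k`-linear span `P_F` of the monomials `x^q` with `q ∈ Q ∖ F` is a
prime ideal of `k[Q]`, and `k[Q]/P_F ≅ k[F]` as `k`-algebras. -/
theorem stmt15 {d : ℕ} (k : Type*) [Field k]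
    (Q : AddSubmonoid (Fin d → ℤ)) (hfg : Q.FG)
    (hsharp : (Q : Set (Fin d → ℤ)) ∩ (-(Q : Set (Fin d → ℤ))) = {0})
    (F : AddSubmonoid (Fin d → ℤ))
    (hFface : ∃ lam : (Fin d → ℤ) →ₗ[ℤ] ℤ, (∀ q ∈ Q, 0 ≤ lam q) ∧
      (F : Set (Fin d → ℤ)) = {q | q ∈ Q ∧ lam q = 0}) :
    ∃ P : Ideal (AddMonoidAlgebra k ↥Q),
      (P : Set (AddMonoidAlgebra k ↥Q)) =
        (Submodule.span k {f | ∃ q : ↥Q, (q : Fin d → ℤ) ∉ F ∧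
            f = AddMonoidAlgebra.single q (1 : k)} :
          Submodule k (AddMonoidAlgebra k ↥Q)) ∧
      P.IsPrime ∧
      Nonempty ((AddMonoidAlgebra k ↥Q ⧸ P) ≃ₐ[k] AddMonoidAlgebra k ↥F) := by
  classical
  obtain ⟨lam, hlam, hF⟩ := hFface
  have hmemF : ∀ x : Fin d → ℤ, x ∈ F ↔ x ∈ Q ∧ lam x = 0 := by
    intro x
    constructor
    · intro hx; have : x ∈ (F : Set (Fin d → ℤ)) := hx; rw [hF] at this; exact this
    · intro hx; have : x ∈ (F : Set (Fin d → ℤ)) := by rw [hF]; exact hx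
      exact this
  have hFQ : ∀ x : Fin d → ℤ, x ∈ F → x ∈ Q := fun x hx => ((hmemF x).1 hx).1
  -- the face property
  have hface : ∀ a b : ↥Q, ((a : Fin d → ℤ) + b ∈ F) →
      ((a : Fin d → ℤ) ∈ F ∧ (b : Fin d → ℤ) ∈ F) := by
    intro a b hab
    have h0 : lam ((a : Fin d → ℤ) + b) = 0 := ((hmemF _).1 hab).2
    have ha : 0 ≤ lam (a : Fin d → ℤ) := hlam _ a.2
    have hb : 0 ≤ lam (b : Fin d → ℤ) := hlam _ b.2
    rw [map_add] at h0
    constructor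
    · exact (hmemF _).2 ⟨a.2, by omega⟩
    · exact (hmemF _).2 ⟨b.2, by omega⟩
  -- the inclusion on points
  set e : ↥F → ↥Q := fun p => ⟨(p : Fin d → ℤ), hFQ _ p.2⟩ with he
  -- the monoid hom on monomials
  set g : Multiplicative ↥Q →* AddMonoidAlgebra k ↥F :=
  { toFun := fun q => if h : ((Multiplicative.toAdd q : ↥Q) : Fin d → ℤ) ∈ F then
      AddMonoidAlgebra.single (⟨_, h⟩ : ↥F) (1 : k) else 0
    map_one' := by
      rw [dif_pos (show ((Multiplicative.toAdd (1 : Multiplicative ↥Q) : ↥Q) : Fin d → ℤ) ∈ F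
        from F.zero_mem)]
      rfl
    map_mul' := by
      intro a b
      by_cases hab : ((Multiplicative.toAdd (a * b) : ↥Q) : Fin d → ℤ) ∈ F
      · have hab' : ((Multiplicative.toAdd a : ↥Q) : Fin d → ℤ)
            + ((Multiplicative.toAdd b : ↥Q) : Fin d → ℤ) ∈ F := hab
        obtain ⟨ha, hb⟩ := hface _ _ hab'
        rw [dif_pos hab, dif_pos ha, dif_pos hb, AddMonoidAlgebra.single_mul_single,
          one_mul]
        rfl
      · rw [dif_neg hab]
        by_cases ha : ((Multiplicative.toAdd a : ↥Q) : Fin d → ℤ) ∈ F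
        · have hb : ¬ ((Multiplicative.toAdd b : ↥Q) : Fin d → ℤ) ∈ F := by
            intro hb
            exact hab ((hmemF _).2 ⟨(Multiplicative.toAdd (a*b) : ↥Q).2, by
              have h1 : lam ((Multiplicative.toAdd a : ↥Q) : Fin d → ℤ) = 0 :=
                ((hmemF _).1 ha).2
              have h2 : lam ((Multiplicative.toAdd b : ↥Q) : Fin d → ℤ) = 0 :=
                ((hmemF _).1 hb).2
              have : ((Multiplicative.toAdd (a*b) : ↥Q) : Fin d → ℤ)
                  = ((Multiplicative.toAdd a : ↥Q) : Fin d → ℤ)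
                  + ((Multiplicative.toAdd b : ↥Q) : Fin d → ℤ) := rfl
              rw [this, map_add, h1, h2, add_zero]⟩)
          rw [dif_neg hb, mul_zero]
        · rw [dif_neg ha, zero_mul] } with hg
  set π : AddMonoidAlgebra k ↥Q →ₐ[k] AddMonoidAlgebra k ↥F :=
    AddMonoidAlgebra.lift k (AddMonoidAlgebra k ↥F) ↥Q g with hπ
  have hπ_single : ∀ (q : ↥Q) (c : k), π (AddMonoidAlgebra.single q c) =
      (if h : (q : Fin d → ℤ) ∈ F then
        AddMonoidAlgebra.single (⟨_, h⟩ : ↥F) c else 0) := by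
    intro q c
    rw [hπ, AddMonoidAlgebra.lift_single]
    by_cases h : (q : Fin d → ℤ) ∈ F
    · rw [dif_pos h]
      show c • (if h' : ((Multiplicative.toAdd (Multiplicative.ofAdd q) : ↥Q) : Fin d → ℤ) ∈ F
        then AddMonoidAlgebra.single (⟨_, h'⟩ : ↥F) (1 : k) else 0) = _
      rw [dif_pos (show ((Multiplicative.toAdd (Multiplicative.ofAdd q) : ↥Q) : Fin d → ℤ) ∈ F
        from h), AddMonoidAlgebra.smul_single, smul_eq_mul, mul_one]
      rfl
    · rw [dif_neg h]
      show c • (if h' : ((Multiplicative.toAdd (Multiplicative.ofAdd q) : ↥Q) : Fin d → ℤ) ∈ F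
        then AddMonoidAlgebra.single (⟨_, h'⟩ : ↥F) (1 : k) else 0) = _
      rw [dif_neg (show ¬ ((Multiplicative.toAdd (Multiplicative.ofAdd q) : ↥Q) : Fin d → ℤ) ∈ F
        from h), smul_zero]
  -- coefficient formula
  have hcoef : ∀ (f : AddMonoidAlgebra k ↥Q) (p : ↥F), (π f).coeff p = f.coeff (e p) := by
    intro f
    induction f using AddMonoidAlgebra.induction_linear with
    | zero => intro p; simp
    | add f g hf hg =>
        intro p
        rw [map_add]
        show (π f + π g).coeff p = (f + g).coeff (e p)
        rw [AddMonoidAlgebra.coeff_add, AddMonoidAlgebra.coeff_add, Finsupp.add_apply, Finsupp.add_apply, hf, hg]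
    | single q c =>
        intro p
        rw [hπ_single]
        by_cases h : (q : Fin d → ℤ) ∈ F
        · rw [dif_pos h]
          show Finsupp.single (⟨_, h⟩ : ↥F) c p = Finsupp.single q c (e p)
          rw [Finsupp.single_apply, Finsupp.single_apply]
          congr 1
          simp only [eq_iff_iff]
          constructor
          · intro hh; rw [Subtype.ext_iff] at hh ⊢; exact hh
          · intro hh; rw [Subtype.ext_iff] at hh ⊢; exact hh
        · rw [dif_neg h]
          show (0 : AddMonoidAlgebra k ↥F).coeff p = Finsupp.single q c (e p)
          rw [Finsupp.single_apply, if_neg, AddMonoidAlgebra.coeff_zero, Finsupp.coe_zero, Pi.zero_apply]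
          intro hh
          apply h
          rw [hh]
          exact p.2
  -- surjectivity
  have hsurj : Function.Surjective π := by
    intro y
    induction y using AddMonoidAlgebra.induction_linear with
    | zero => exact ⟨0, map_zero π⟩
    | add f g hf hg =>
        obtain ⟨a, ha⟩ := hf; obtain ⟨b, hb⟩ := hg
        exact ⟨a + b, by rw [map_add, ha, hb]⟩
    | single p c =>
        refine ⟨AddMonoidAlgebra.single (e p) c, ?_⟩
        rw [hπ_single, dif_pos p.2]
  set P : Ideal (AddMonoidAlgebra k ↥Q) := RingHom.ker π with hP
  refine ⟨P, ?_, ?_, ?_⟩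
  · -- the kernel is the span of the monomials outside F
    ext f
    simp only [SetLike.mem_coe]
    constructor
    · intro hf
      have hf0 : π f = 0 := hf
      have hsupp : ∀ q ∈ f.coeff.support, (q : Fin d → ℤ) ∉ F := by
        intro q hq hqF
        have : f.coeff (e ⟨_, hqF⟩) = 0 := by
          rw [← hcoef, hf0]; simp
        have heq : e ⟨(q : Fin d → ℤ), hqF⟩ = q := by
          apply Subtype.ext; rfl
        rw [heq] at this
        exact (Finsupp.mem_support_iff.1 hq) this
      have hrepr : f = ∑ q ∈ f.coeff.support, AddMonoidAlgebra.single q (f.coeff q) :=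
        (AddMonoidAlgebra.sum_coeff_single f).symm
      rw [hrepr]
      apply Submodule.sum_mem
      intro q hq
      have : AddMonoidAlgebra.single q (f.coeff q) = (f.coeff q) • AddMonoidAlgebra.single q (1 : k) := by
        rw [AddMonoidAlgebra.smul_single, smul_eq_mul, mul_one]
      rw [this]
      exact Submodule.smul_mem _ _ (Submodule.subset_span ⟨q, hsupp q hq, rfl⟩)
    · intro hf
      induction hf using Submodule.span_induction with
      | mem x hx =>
          obtain ⟨q, hqF, rfl⟩ := hx
          show π (AddMonoidAlgebra.single q 1) = 0
          rw [hπ_single, dif_neg hqF]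
      | zero => exact (RingHom.ker π).zero_mem
      | add x y _ _ hx hy => exact (RingHom.ker π).add_mem hx hy
      | smul c x _ hx =>
          show π (c • x) = 0
          rw [map_smul]
          show c • π x = 0
          rw [show π x = 0 from hx, smul_zero]
  · -- prime
    haveI : UniqueSums ↥F :=
      UniqueSums.of_injective_addHom F.subtype.toAddHom Subtype.val_injective inferInstance
    haveI : NoZeroDivisors (AddMonoidAlgebra k ↥F) := by infer_instance
    haveI : IsDomain (AddMonoidAlgebra k ↥F) := NoZeroDivisors.to_isDomain _
    exact RingHom.ker_isPrime π
  · exact ⟨Ideal.quotientKerAlgEquivOfSurjective hsurj⟩
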